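/- (Lemma 1, mixing degradation) Let H_k, k = 0,1,…, be row-stochastic matrices such that for some L ∈ ℕ and μ > 0, τ₁(H_{k+L−1}⋯H_k) ≤ 1 − μ for all k. Let σ_{i,k} ∈ (0,1] with σ̌ = inf_{i,k} σ_{i,k} > 0, let Σ_k = diag(σ_{1,k},…,σ_{n,k}), and define H_k^σ = I − Σ_k + Σ_k H_k. Then for all k, τ₁(H_{k+L−1}^σ ⋯ H_k^σ) ≤ 1 − σ̌^L μ. -/
import Mathlib


/-- row-stochastic matrix -/
def RowStochastic {n : ℕ} (A : Matrix (Fin n) (Fin n) ℝ) : Prop :=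
  (∀ i j, 0 ≤ A i j) ∧ (∀ i, ∑ j, A i j = 1)

/-- coefficient of ergodicity -/
noncomputable def tau1 {n : ℕ} (A : Matrix (Fin n) (Fin n) ℝ) : ℝ :=
  (1/2) * ⨆ p : Fin n × Fin n, ∑ s, |A p.1 s - A p.2 s|

/-- the ordered backward product H_{k+L-1} ⋯ H_{k+1} H_k -/
noncomputable def backProd {n : ℕ} (H : ℕ → Matrix (Fin n) (Fin n) ℝ) (k L : ℕ) :
    Matrix (Fin n) (Fin n) ℝ :=
  (List.ofFn (fun ℓ : Fin L => H (k + (L - 1 - ℓ.val)))).prod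

lemma RowStochastic.mul {n : ℕ} {A B : Matrix (Fin n) (Fin n) ℝ}
    (hA : RowStochastic A) (hB : RowStochastic B) : RowStochastic (A * B) := by
  constructor
  · intro i j
    rw [Matrix.mul_apply]
    exact Finset.sum_nonneg fun s _ => mul_nonneg (hA.1 i s) (hB.1 s j)
  · intro i
    simp only [Matrix.mul_apply]
    rw [Finset.sum_comm]
    simp_rw [← Finset.mul_sum, hB.2, mul_one, hA.2]

lemma RowStochastic.one {n : ℕ} : RowStochastic (1 : Matrix (Fin n) (Fin n) ℝ) := by
  constructor
  · intro i j
    rw [Matrix.one_apply]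
    split <;> norm_num
  · intro i; simp [Matrix.one_apply]

lemma backProd_succ {n : ℕ} (H : ℕ → Matrix (Fin n) (Fin n) ℝ) (k L : ℕ) :
    backProd H k (L + 1) = H (k + L) * backProd H k L := by
  unfold backProd
  rw [List.ofFn_succ, List.prod_cons]
  have h1 : k + (L + 1 - 1 - ((0 : Fin (L+1))).val) = k + L := by simp
  have h2 : ∀ ℓ : Fin L, k + (L + 1 - 1 - (Fin.succ ℓ).val) = k + (L - 1 - ℓ.val) := by
    intro ℓ; simp only [Fin.val_succ]; omega
  simp only [h1, h2]

lemma backProd_RS {n : ℕ} {H : ℕ → Matrix (Fin n) (Fin n) ℝ}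
    (hH : ∀ m, RowStochastic (H m)) (k L : ℕ) : RowStochastic (backProd H k L) := by
  induction L with
  | zero => simpa [backProd] using RowStochastic.one
  | succ L ih => rw [backProd_succ]; exact (hH _).mul ih

/-- Lemma 1, mixing degradation:
if τ₁(H_{k+L−1}⋯H_k) ≤ 1 − μ for all k, then with H_k^σ = I − Σ_k + Σ_k H_k and
σ̌ = inf σ_{i,k} > 0, τ₁(H_{k+L−1}^σ⋯H_k^σ) ≤ 1 − σ̌^L μ for all k. -/
theorem mixing_degradation {n : ℕ} (hn : 0 < n)
    (H : ℕ → Matrix (Fin n) (Fin n) ℝ) (hH : ∀ k, RowStochastic (H k))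
    (L : ℕ) (hL : 1 ≤ L) (μ : ℝ) (hμ : 0 < μ)
    (hmix : ∀ k, tau1 (backProd H k L) ≤ 1 - μ)
    (σ : Fin n → ℕ → ℝ) (hσ : ∀ i k, σ i k ∈ Set.Ioc (0:ℝ) 1)
    (σc : ℝ) (hσc : 0 < σc) (hσcle : ∀ i k, σc ≤ σ i k)
    (hσcinf : ∀ ε > 0, ∃ i k, σ i k < σc + ε)
    (Hσ : ℕ → Matrix (Fin n) (Fin n) ℝ)
    (hHσ : ∀ k, Hσ k = 1 - Matrix.diagonal (fun i => σ i k)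
        + Matrix.diagonal (fun i => σ i k) * H k) :
    ∀ k, tau1 (backProd Hσ k L) ≤ 1 - σc ^ L * μ := by
  intro k
  -- Hσ is row-stochastic
  have hHσRS : ∀ m, RowStochastic (Hσ m) := by
    intro m
    rw [hHσ m]
    constructor
    · intro i j
      simp only [Matrix.add_apply, Matrix.sub_apply, Matrix.diagonal_mul, Matrix.one_apply,
        Matrix.diagonal_apply]
      have h1 := (hσ i m).2
      have h2 := (hH m).1 i j
      have h3 := (hσ i m).1
      split_ifs <;> nlinarith
    · intro i
      simp only [Matrix.add_apply, Matrix.sub_apply, Matrix.diagonal_mul]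
      rw [Finset.sum_add_distrib, Finset.sum_sub_distrib]
      simp_rw [← Finset.mul_sum, (hH m).2 i]
      simp [Matrix.diagonal_apply, Finset.sum_ite_eq', RowStochastic.one.2 i]
  -- entrywise bound: Hσ m i j ≥ σc * H m i j
  have hent : ∀ m i j, σc * H m i j ≤ Hσ m i j := by
    intro m i j
    rw [hHσ m]
    simp only [Matrix.add_apply, Matrix.sub_apply, Matrix.diagonal_mul, Matrix.one_apply,
      Matrix.diagonal_apply]
    have hHn := (hH m).1 i j
    have hs1 := (hσ i m).2
    have hs0 := hσcle i m
    split_ifs <;> nlinarith [mul_le_mul_of_nonneg_right hs0 hHn]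
  -- entrywise bound for products
  have hprod : ∀ M i j, σc ^ M * backProd H k M i j ≤ backProd Hσ k M i j := by
    intro M
    induction M with
    | zero => intro i j; simp [backProd]
    | succ M ih =>
      intro i j
      rw [backProd_succ, backProd_succ]
      simp only [Matrix.mul_apply]
      rw [Finset.mul_sum]
      apply Finset.sum_le_sum
      intro s _
      have h1 : σc ^ (M + 1) * (H (k + M) i s * backProd H k M s j)
          = (σc * H (k + M) i s) * (σc ^ M * backProd H k M s j) := by ring
      rw [h1]
      have hA := hent (k + M) i s
      have hB := ih s j
      have hA0 : (0:ℝ) ≤ σc * H (k + M) i s := mul_nonneg hσc.le ((hH _).1 i s)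
      have hB0 : (0:ℝ) ≤ σc ^ M * backProd H k M s j :=
        mul_nonneg (pow_nonneg hσc.le M) ((backProd_RS hH k M).1 s j)
      exact mul_le_mul hA hB hB0 (le_trans hA0 hA)
  set P := backProd H k L with hP
  set Q := backProd Hσ k L with hQ
  have hPRS := backProd_RS hH k L
  have hQRS := backProd_RS hHσRS k L
  -- for each pair, ∑ min(P i s, P j s) ≥ μ
  have hnE : Nonempty (Fin n × Fin n) := ⟨⟨⟨0, hn⟩, ⟨0, hn⟩⟩⟩
  have habs : ∀ (A : Matrix (Fin n) (Fin n) ℝ), RowStochastic A →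
      ∀ p : Fin n × Fin n, ∑ s, |A p.1 s - A p.2 s|
        = 2 - 2 * ∑ s, min (A p.1 s) (A p.2 s) := by
    intro A hA p
    have : ∀ s, |A p.1 s - A p.2 s| = A p.1 s + A p.2 s - 2 * min (A p.1 s) (A p.2 s) := by
      intro s
      rcases le_total (A p.1 s) (A p.2 s) with h | h
      · rw [abs_of_nonpos (by linarith), min_eq_left h]; ring
      · rw [abs_of_nonneg (by linarith), min_eq_right h]; ring
    simp_rw [this]
    rw [Finset.sum_sub_distrib, Finset.sum_add_distrib, hA.2, hA.2, ← Finset.mul_sum]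
    ring
  have hbdd : ∀ (A : Matrix (Fin n) (Fin n) ℝ),
      BddAbove (Set.range fun p : Fin n × Fin n => ∑ s, |A p.1 s - A p.2 s|) :=
    fun A => Set.Finite.bddAbove (Set.finite_range _)
  have hminP : ∀ p : Fin n × Fin n, μ ≤ ∑ s, min (P p.1 s) (P p.2 s) := by
    intro p
    have h1 := hmix k
    have h2 : ∑ s, |P p.1 s - P p.2 s| ≤ ⨆ q : Fin n × Fin n, ∑ s, |P q.1 s - P q.2 s| :=
      le_ciSup (hbdd P) p
    have h3 : (1/2 : ℝ) * ∑ s, |P p.1 s - P p.2 s| ≤ 1 - μ := by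
      calc (1/2 : ℝ) * ∑ s, |P p.1 s - P p.2 s|
          ≤ (1/2 : ℝ) * ⨆ q : Fin n × Fin n, ∑ s, |P q.1 s - P q.2 s| := by linarith
        _ ≤ 1 - μ := h1
    rw [habs P hPRS p] at h3
    linarith
  have hminQ : ∀ p : Fin n × Fin n, σc ^ L * μ ≤ ∑ s, min (Q p.1 s) (Q p.2 s) := by
    intro p
    calc σc ^ L * μ ≤ σc ^ L * ∑ s, min (P p.1 s) (P p.2 s) := by
          exact mul_le_mul_of_nonneg_left (hminP p) (pow_nonneg hσc.le L)
      _ = ∑ s, σc ^ L * min (P p.1 s) (P p.2 s) := Finset.mul_sum _ _ _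
      _ ≤ ∑ s, min (Q p.1 s) (Q p.2 s) := by
          apply Finset.sum_le_sum
          intro s _
          rw [mul_min_of_nonneg _ _ (pow_nonneg hσc.le L)]
          exact min_le_min (hprod L p.1 s) (hprod L p.2 s)
  have hs : (⨆ p : Fin n × Fin n, ∑ s, |Q p.1 s - Q p.2 s|) ≤ 2 * (1 - σc ^ L * μ) := by
    apply ciSup_le
    intro p
    rw [habs Q hQRS p]
    have := hminQ p
    linarith
  unfold tau1
  linarith
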